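/- On a normal metric weak para-f-structure, the tensors N^{(3)}_i = £_{ξ_i} f vanish, i.e., the Lie derivative of f along each characteristic vector field ξ_i is zero. -/
import Mathlib


open scoped BigOperators

noncomputable section

variable (C V : Type*) [CommRing C] [Algebra ℝ C] [AddCommGroup V]
  [Module ℝ V] [Module C V] [IsScalarTower ℝ C V]

/-- A metric weak para-f-structure on a manifold, modelled algebraically:
`C` plays the role of the ring of smooth functions, `V` the `C`-module of vector fields
with Lie bracket `b` and derivation action `act` of vector fields on functions,
`g` is a compatible pseudo-Riemannian metric (with `f` of rank `2n`, encoded by `hrank`)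
and `nabla` its Levi-Civita connection (torsion-free and metric). -/
structure MWPF (p : ℕ) where
  f : V →ₗ[C] V
  Q : V →ₗ[C] V
  ξ : Fin p → V
  η : Fin p → V →ₗ[C] C
  g : V →ₗ[C] V →ₗ[C] C
  b : V → V → V
  act : V → C → C
  nabla : V → V → V
  hQbij : Function.Bijective Q
  hf2 : ∀ X, f (f X) = Q X - ∑ i, η i X • ξ i
  hf3 : ∀ X, f (f (f X)) = f (Q X)
  hetaxi : ∀ i j, η i (ξ j) = if i = j then (1 : C) else 0
  hQxi : ∀ i, Q (ξ i) = ξ i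
  hrange : ∀ X : V, X ∈ LinearMap.range f ↔ ∀ i, η i X = 0
  hgsymm : ∀ X Y, g X Y = g Y X
  hgnondeg : ∀ X, (∀ Y, g X Y = 0) → X = 0
  hrank : ∀ Z, (∀ i, η i Z = 0) → (∀ Y, g Z (f Y) = 0) → Z = 0
  hgcompat : ∀ X Y, g (f X) (f Y) = -(g X (Q Y)) + ∑ i, η i X * η i Y
  hbskew : ∀ X Y, b X Y = - b Y X
  hbaddl : ∀ X Y Z, b (X + Y) Z = b X Z + b Y Z
  hjacobi : ∀ X Y Z, b X (b Y Z) + b Y (b Z X) + b Z (b X Y) = 0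
  hactadd : ∀ X a c, act X (a + c) = act X a + act X c
  hactmul : ∀ X a c, act X (a * c) = act X a * c + a * act X c
  hactX : ∀ (a : C) X Y c, act (a • X + Y) c = a * act X c + act Y c
  hbleib : ∀ X (a : C) Y, b X (a • Y) = act X a • Y + a • b X Y
  hnab1 : ∀ (a : C) X X' Y, nabla (a • X + X') Y = a • nabla X Y + nabla X' Y
  hnabadd : ∀ X Y Z, nabla X (Y + Z) = nabla X Y + nabla X Z
  hnableib : ∀ X (a : C) Y, nabla X (a • Y) = act X a • Y + a • nabla X Y
  htors : ∀ X Y, nabla X Y - nabla Y X = b X Y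
  hmetric : ∀ X Y Z, act X (g Y Z) = g (nabla X Y) Z + g Y (nabla X Z)

namespace MWPF

variable {C V} {p : ℕ} (s : MWPF C V p)

/-- The fundamental 2-form `Φ(X,Y) = g(X, fY)`. -/
def Phi (X Y : V) : C := s.g X (s.f Y)

/-- `dη^i(X,Y) = (1/2)(X(η^i Y) - Y(η^i X) - η^i [X,Y])`. -/
def dEta (i : Fin p) (X Y : V) : C :=
  (2⁻¹ : ℝ) • (s.act X (s.η i Y) - s.act Y (s.η i X) - s.η i (s.b X Y))

/-- The Nijenhuis torsion `[f,f]`. -/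
def Nij (X Y : V) : V :=
  s.f (s.f (s.b X Y)) + s.b (s.f X) (s.f Y) - s.f (s.b (s.f X) Y) - s.f (s.b X (s.f Y))

/-- `N^(1)(X,Y) = [f,f](X,Y) - 2 Σ_i dη^i(X,Y) ξ_i`. -/
def N1 (X Y : V) : V := s.Nij X Y - (2 : ℝ) • ∑ i, s.dEta i X Y • s.ξ i

/-- The difference tensor `Q̃ = Q - id`. -/
def Qt (X : V) : V := s.Q X - X

/-- The Lie derivative of `f`: `(£_Z f)X = [Z, fX] - f[Z,X]`. -/
def Lief (Z X : V) : V := s.b Z (s.f X) - s.f (s.b Z X)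

/-- The Lie derivative of `g`: `(£_Z g)(X,Y) = Z(g(X,Y)) - g([Z,X],Y) - g(X,[Z,Y])`. -/
def Lieg (Z X Y : V) : C := s.act Z (s.g X Y) - s.g (s.b Z X) Y - s.g X (s.b Z Y)

/-- `N^(2)_i(X,Y) = (£_{fX} η^i)Y - (£_{fY} η^i)X`. -/
def N2 (i : Fin p) (X Y : V) : C :=
  (s.act (s.f X) (s.η i Y) - s.η i (s.b (s.f X) Y))
    - (s.act (s.f Y) (s.η i X) - s.η i (s.b (s.f Y) X))

/-- The exterior differential of the fundamental 2-form. -/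
def dPhi (X Y Z : V) : C := (3⁻¹ : ℝ) •
  (s.act X (s.Phi Y Z) + s.act Y (s.Phi Z X) + s.act Z (s.Phi X Y)
    - s.Phi (s.b X Y) Z - s.Phi (s.b Z X) Y - s.Phi (s.b Y Z) X)

/-- The tensor `h_i = (1/2) £_{ξ_i} f`. -/
def hmap (i : Fin p) (X : V) : V := (2⁻¹ : ℝ) • s.Lief (s.ξ i) X

/-- The tensor `N^(5)`. -/
def N5 (X Y Z : V) : C :=
  s.act (s.f Z) (s.g X (s.Qt Y)) - s.act (s.f Y) (s.g X (s.Qt Z))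
    + s.g (s.b X (s.f Z)) (s.Qt Y) - s.g (s.b X (s.f Y)) (s.Qt Z)
    + s.g (s.b Y (s.f Z) - s.b Z (s.f Y) - s.f (s.b Y Z)) (s.Qt X)

/-- The curvature tensor of `nabla`. -/
def Rm (X Y Z : V) : V :=
  s.nabla X (s.nabla Y Z) - s.nabla Y (s.nabla X Z) - s.nabla (s.b X Y) Z

end MWPF

/-- on a normal metric weak para-f-structure,
`N^(3)_i = £_{ξ_i} f` vanishes for each `i`. -/
theorem normal_Lief_xi_eq_zero {C V : Type*} [CommRing C] [Algebra ℝ C] [AddCommGroup V]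
    [Module ℝ V] [Module C V] [IsScalarTower ℝ C V] {p : ℕ} (s : MWPF C V p)
    (hN : ∀ X Y, s.N1 X Y = 0) :
    ∀ (i : Fin p) (X : V), s.Lief (s.ξ i) X = 0 := by
  -- basic facts about the derivation and bracket
  have hact0 : ∀ X : V, s.act X (0 : C) = 0 := by
    intro X
    have h := s.hactadd X 0 0
    rw [add_zero] at h
    exact (left_eq_add.mp h)
  have hact1 : ∀ X : V, s.act X (1 : C) = 0 := by
    intro X
    have h := s.hactmul X 1 1
    rw [mul_one, mul_one, one_mul] at h
    exact (left_eq_add.mp h)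
  have hb0l : ∀ Z : V, s.b 0 Z = 0 := by
    intro Z
    have h := s.hbaddl 0 0 Z
    rw [add_zero] at h
    exact (left_eq_add.mp h)
  have hb0r : ∀ Z : V, s.b Z 0 = 0 := by
    intro Z; rw [s.hbskew, hb0l, neg_zero]
  have hetaf : ∀ (j : Fin p) (X : V), s.η j (s.f X) = 0 := by
    intro j X
    exact (s.hrange (s.f X)).mp ⟨X, rfl⟩ j
  -- f ξ_i = 0
  have hf2xi : ∀ i : Fin p, s.f (s.f (s.ξ i)) = 0 := by
    intro i
    rw [s.hf2, s.hQxi]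
    have : (∑ j, s.η j (s.ξ i) • s.ξ j) = s.ξ i := by
      have : ∀ j : Fin p, s.η j (s.ξ i) • s.ξ j = if j = i then s.ξ j else 0 := by
        intro j
        rw [s.hetaxi j i]
        split_ifs with h
        · rw [one_smul]
        · rw [zero_smul]
      rw [Finset.sum_congr rfl (fun j _ => this j), Finset.sum_ite_eq' Finset.univ i
        (fun j => s.ξ j)]
      simp
    rw [this, sub_self]
  have hfxi : ∀ i : Fin p, s.f (s.ξ i) = 0 := by
    intro i
    have h3 : s.f (s.f (s.f (s.ξ i))) = 0 := by rw [hf2xi, map_zero]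
    have h4 := s.hf3 (s.ξ i)
    rw [s.hQxi] at h4
    rw [← h4, h3]
  intro i
  -- the key consequence of normality with Y = ξ_i
  have main : ∀ X : V, s.f (s.f (s.b X (s.ξ i))) - s.f (s.b (s.f X) (s.ξ i))
      + ∑ j, (s.act (s.ξ i) (s.η j X) + s.η j (s.b X (s.ξ i))) • s.ξ j = 0 := by
    intro X
    have h0 := hN X (s.ξ i)
    unfold MWPF.N1 MWPF.Nij at h0
    rw [hfxi i, hb0r, hb0r, map_zero, add_zero, sub_zero] at h0
    have hsum : (2 : ℝ) • ∑ j, s.dEta j X (s.ξ i) • s.ξ j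
        = -∑ j, (s.act (s.ξ i) (s.η j X) + s.η j (s.b X (s.ξ i))) • s.ξ j := by
      rw [Finset.smul_sum, ← Finset.sum_neg_distrib]
      apply Finset.sum_congr rfl
      intro j _
      unfold MWPF.dEta
      have hcst : s.act X (s.η j (s.ξ i)) = 0 := by
        rw [s.hetaxi j i]
        split_ifs with h
        · exact hact1 X
        · exact hact0 X
      rw [hcst, ← smul_assoc, ← smul_assoc, smul_eq_mul]
      norm_num
      rw [show (-s.act (s.ξ i) (s.η j X) - s.η j (s.b X (s.ξ i)) : C)
        = -(s.act (s.ξ i) (s.η j X) + s.η j (s.b X (s.ξ i))) by ring, neg_smul]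
    rw [hsum, sub_neg_eq_add] at h0
    exact h0
  -- coefficient identity
  have hA : ∀ (k : Fin p) (X : V),
      s.act (s.ξ i) (s.η k X) + s.η k (s.b X (s.ξ i)) = 0 := by
    intro k X
    have h0 := congrArg (s.η k) (main X)
    rw [map_zero, map_add, map_sub, hetaf, hetaf, sub_zero, map_sum] at h0
    have hsum : (∑ j, s.η k ((s.act (s.ξ i) (s.η j X) + s.η j (s.b X (s.ξ i))) • s.ξ j))
        = s.act (s.ξ i) (s.η k X) + s.η k (s.b X (s.ξ i)) := by
      have : ∀ j : Fin p,
          s.η k ((s.act (s.ξ i) (s.η j X) + s.η j (s.b X (s.ξ i))) • s.ξ j)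
          = if j = k then s.act (s.ξ i) (s.η j X) + s.η j (s.b X (s.ξ i)) else 0 := by
        intro j
        rw [map_smul, smul_eq_mul, s.hetaxi k j]
        by_cases h : j = k
        · subst h; simp
        · have h' : ¬ k = j := fun hh => h hh.symm
          simp [h, h']
      rw [Finset.sum_congr rfl (fun j _ => this j),
        Finset.sum_ite_eq' Finset.univ k
          (fun j => s.act (s.ξ i) (s.η j X) + s.η j (s.b X (s.ξ i)))]
      simp
    rw [hsum, zero_add] at h0
    exact h0
  intro X
  -- the sum term in `main` vanishes
  have hsum0 : (∑ j, (s.act (s.ξ i) (s.η j X) + s.η j (s.b X (s.ξ i))) • s.ξ j) = 0 := by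
    apply Finset.sum_eq_zero
    intro j _
    rw [hA j X, zero_smul]
  have hB : s.f (s.f (s.b X (s.ξ i))) - s.f (s.b (s.f X) (s.ξ i)) = 0 := by
    have h0 := main X
    rw [hsum0, add_zero] at h0
    exact h0
  -- f (Lief ξ X) = 0
  have hfL : s.f (s.Lief (s.ξ i) X) = 0 := by
    unfold MWPF.Lief
    rw [map_sub, s.hbskew (s.ξ i) (s.f X), s.hbskew (s.ξ i) X, map_neg, map_neg, map_neg]
    rw [sub_neg_eq_add, neg_add_eq_sub]
    rw [sub_eq_zero] at hB ⊢
    exact hB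
  -- η k (Lief ξ X) = 0
  have hηL : ∀ k : Fin p, s.η k (s.Lief (s.ξ i) X) = 0 := by
    intro k
    unfold MWPF.Lief
    rw [map_sub, hetaf, sub_zero, s.hbskew (s.ξ i) (s.f X), map_neg]
    have h := hA k (s.f X)
    rw [hetaf, hact0, zero_add] at h
    rw [h, neg_zero]
  -- conclude via injectivity of Q
  have hQL : s.Q (s.Lief (s.ξ i) X) = 0 := by
    have h := s.hf2 (s.Lief (s.ξ i) X)
    rw [hfL, map_zero] at h
    have hs : (∑ j, s.η j (s.Lief (s.ξ i) X) • s.ξ j) = 0 := by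
      apply Finset.sum_eq_zero
      intro j _
      rw [hηL j, zero_smul]
    rw [hs, sub_zero] at h
    exact h.symm
  have := s.hQbij.injective (by rw [hQL, map_zero] : s.Q (s.Lief (s.ξ i) X) = s.Q 0)
  exact this
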